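/- For indicator random variables X_1,...,X_n, real 0 < β < 1 and integer 0 < k < βn, the probability that X_1+...+X_n ≥ βn is at most (1/C(⌊βn⌋,k)) times the sum over all subsets S of {1,...,n} of size k of P(∀ i ∈ S, X_i = 1). -/

import Mathlib

open MeasureTheory Finset
open scoped ENNReal

/-- Linial–Luria generalized Chernoff bound, first part. -/
theorem linial_luria_first_part {Ω : Type*} [MeasurableSpace Ω]
    (μ : Measure Ω) [IsProbabilityMeasure μ]
    (n : ℕ) (X : Fin n → Ω → ℝ) (hX : ∀ i, Measurable (X i))
    (hind : ∀ i ω, X i ω = 0 ∨ X i ω = 1)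
    (β : ℝ) (hβ0 : 0 < β) (hβ1 : β < 1)
    (k : ℕ) (hk0 : 0 < k) (hk : (k : ℝ) < β * n) :
    μ {ω | β * n ≤ ∑ i, X i ω} ≤
      (1 / (Nat.choose ⌊β * (n : ℝ)⌋₊ k : ℝ≥0∞)) *
        ∑ S ∈ (Finset.univ : Finset (Fin n)).powersetCard k,
          μ {ω | ∀ i ∈ S, X i ω = 1} := by
  classical
  set A := {ω | β * n ≤ ∑ i, X i ω} with hAdef
  set C : ℕ := Nat.choose ⌊β * (n : ℝ)⌋₊ k with hCdef
  have hAmeas : MeasurableSet A :=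
    measurableSet_le measurable_const (Finset.measurable_sum _ fun i _ => hX i)
  have hB : ∀ S : Finset (Fin n), MeasurableSet {ω | ∀ i ∈ S, X i ω = 1} := by
    intro S
    have : {ω | ∀ i ∈ S, X i ω = 1} = ⋂ i ∈ S, (X i) ⁻¹' {1} := by
      ext ω; simp [Set.mem_iInter]
    rw [this]
    exact MeasurableSet.biInter S.countable_toSet
      (fun i _ => (hX i) (measurableSet_singleton 1))
  have hkC : k ≤ ⌊β * (n : ℝ)⌋₊ := Nat.le_floor hk.le
  have hCpos : 0 < C := Nat.choose_pos hkC
  have key : (C : ℝ≥0∞) * μ A ≤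
      ∑ S ∈ (Finset.univ : Finset (Fin n)).powersetCard k,
        μ {ω | ∀ i ∈ S, X i ω = 1} := by
    calc (C : ℝ≥0∞) * μ A
        = ∫⁻ ω, (C : ℝ≥0∞) * A.indicator 1 ω ∂μ := by
          rw [lintegral_const_mul _ (measurable_one.indicator hAmeas),
            lintegral_indicator_one hAmeas]
      _ ≤ ∫⁻ ω, ∑ S ∈ (Finset.univ : Finset (Fin n)).powersetCard k,
            ({ω | ∀ i ∈ S, X i ω = 1}).indicator 1 ω ∂μ := by
          apply lintegral_mono
          intro ω
          dsimp only
          by_cases hω : ω ∈ A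
          · rw [Set.indicator_of_mem hω, Pi.one_apply, mul_one]
            set T : Finset (Fin n) := Finset.univ.filter (fun i => X i ω = 1) with hTdef
            have hsum : ∑ i, X i ω = T.card := by
              rw [← Finset.sum_filter_add_sum_filter_not Finset.univ
                (fun i => X i ω = 1) (fun i => X i ω)]
              have h1 : ∑ i ∈ Finset.univ.filter (fun i => X i ω = 1), X i ω
                  = (T.card : ℝ) := by
                rw [Finset.sum_congr rfl (fun i hi => (Finset.mem_filter.mp hi).2)]
                simp [hTdef]
              have h2 : ∑ i ∈ Finset.univ.filter (fun i => ¬ X i ω = 1), X i ω = 0 := by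
                apply Finset.sum_eq_zero
                intro i hi
                rcases hind i ω with h | h
                · exact h
                · exact absurd h (Finset.mem_filter.mp hi).2
              rw [h1, h2, add_zero]
            have hTcard : ⌊β * (n : ℝ)⌋₊ ≤ T.card := by
              have : β * n ≤ (T.card : ℝ) := by rw [← hsum]; exact hω
              simpa using Nat.floor_le_floor this
            have hCle : C ≤ (T.powersetCard k).card := by
              rw [Finset.card_powersetCard]
              exact Nat.choose_le_choose k hTcard
            calc (C : ℝ≥0∞) ≤ ((T.powersetCard k).card : ℝ≥0∞) := by
                  exact_mod_cast hCle
              _ = ∑ S ∈ T.powersetCard k,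
                    ({ω | ∀ i ∈ S, X i ω = 1}).indicator 1 ω := by
                  have hterm : ∀ S ∈ T.powersetCard k,
                      ({ω | ∀ i ∈ S, X i ω = 1}).indicator (1 : Ω → ℝ≥0∞) ω = 1 := by
                    intro S hS
                    have hST : S ⊆ T := (Finset.mem_powersetCard.mp hS).1
                    have hmem : ω ∈ {ω | ∀ i ∈ S, X i ω = 1} := by
                      intro i hi
                      have := hST hi
                      simpa [hTdef] using this
                    rw [Set.indicator_of_mem hmem, Pi.one_apply]
                  rw [Finset.sum_congr rfl hterm, Finset.sum_const, nsmul_eq_mul, mul_one]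
              _ ≤ ∑ S ∈ (Finset.univ : Finset (Fin n)).powersetCard k,
                    ({ω | ∀ i ∈ S, X i ω = 1}).indicator 1 ω := by
                  apply Finset.sum_le_sum_of_subset
                  intro S hS
                  rw [Finset.mem_powersetCard] at hS ⊢
                  exact ⟨Finset.subset_univ S, hS.2⟩
          · rw [Set.indicator_of_notMem hω, mul_zero]
            exact zero_le
      _ = ∑ S ∈ (Finset.univ : Finset (Fin n)).powersetCard k,
            μ {ω | ∀ i ∈ S, X i ω = 1} := by
          rw [lintegral_finset_sum _ (fun S _ => measurable_one.indicator (hB S))]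
          exact Finset.sum_congr rfl (fun S _ => lintegral_indicator_one (hB S))
  have hC0 : (C : ℝ≥0∞) ≠ 0 := by exact_mod_cast hCpos.ne'
  have hCtop : (C : ℝ≥0∞) ≠ ⊤ := ENNReal.natCast_ne_top C
  calc μ A = (1 / (C : ℝ≥0∞)) * ((C : ℝ≥0∞) * μ A) := by
        rw [← mul_assoc, one_div, ENNReal.inv_mul_cancel hC0 hCtop, one_mul]
    _ ≤ (1 / (C : ℝ≥0∞)) * ∑ S ∈ (Finset.univ : Finset (Fin n)).powersetCard k,
          μ {ω | ∀ i ∈ S, X i ω = 1} := by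
        exact mul_le_mul_right key _
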